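/- Let α, β, γ, σB, σE > 0 with 0 < β < γ. Then the discriminant Δ = 4αβγ(γ+σE²)·[(γ−β)σB² + α(γ+σE²)] of the quadratic h(φ) = αγ(γ−β)φ² − 2αγ(γ+σE²)φ + (γ+σE²)(α(γ+σE²) − βσB²) is strictly positive, and the smaller root φ_a = (γ+σE²)/(γ−β) − √Δ/(2αγ(γ−β)) satisfies: h(φ) > 0 for 0 ≤ φ < min{max(φ_a,0), 1} when φ_a > 0, and h(φ) < 0 for min{max(φ_a,0),1} < φ ≤ 1 when φ_a < 1. -/

import Mathlib

open Real Set

theorem stmt_16 (α β γ σB σE : ℝ) (hα : 0 < α) (hβ : 0 < β) (hγ : 0 < γ)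
    (hσB : 0 < σB) (hσE : 0 < σE) (hβγ : β < γ)
    (h : ℝ → ℝ)
    (hh : ∀ φ : ℝ, h φ =
      α * γ * (γ - β) * φ ^ 2 - 2 * α * γ * (γ + σE ^ 2) * φ +
        (γ + σE ^ 2) * (α * (γ + σE ^ 2) - β * σB ^ 2))
    (Δ : ℝ)
    (hΔ : Δ = 4 * α * β * γ * (γ + σE ^ 2) * ((γ - β) * σB ^ 2 + α * (γ + σE ^ 2)))
    (φa : ℝ)
    (hφa : φa = (γ + σE ^ 2) / (γ - β) - Real.sqrt Δ / (2 * α * γ * (γ - β))) :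
    0 < Δ ∧
    (0 < φa → ∀ φ : ℝ, 0 ≤ φ → φ < min (max φa 0) 1 → 0 < h φ) ∧
    (φa < 1 → ∀ φ : ℝ, min (max φa 0) 1 < φ → φ ≤ 1 → h φ < 0) := by
  have hd : 0 < γ - β := by linarith
  have he : 0 < γ + σE ^ 2 := by positivity
  have h2 : 0 < (γ - β) * σB ^ 2 + α * (γ + σE ^ 2) := by
    have := mul_pos hd (pow_pos hσB 2)
    nlinarith [mul_pos hα he]
  have hΔpos : 0 < Δ := by
    rw [hΔ]
    exact mul_pos (by positivity) h2
  set s := Real.sqrt Δ with hsdef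
  have hspos : 0 < s := Real.sqrt_pos.mpr hΔpos
  have hs2 : s ^ 2 = 4 * α * β * γ * (γ + σE ^ 2) * ((γ - β) * σB ^ 2 + α * (γ + σE ^ 2)) := by
    rw [Real.sq_sqrt hΔpos.le, hΔ]
  have hApos : (0 : ℝ) < 2 * α * γ * (γ - β) := by positivity
  have hA : (2 * α * γ * (γ - β)) ≠ 0 := ne_of_gt hApos
  have hφa' : φa = (2 * α * γ * (γ + σE ^ 2) - s) / (2 * α * γ * (γ - β)) := by
    rw [hφa]
    field_simp
  set φb : ℝ := (2 * α * γ * (γ + σE ^ 2) + s) / (2 * α * γ * (γ - β)) with hφb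
  have hab : φa < φb := by
    rw [hφa', hφb, div_lt_div_iff₀ hApos hApos]
    nlinarith [hspos, hApos]
  have hb1 : 1 < φb := by
    rw [hφb, lt_div_iff₀ hApos]
    nlinarith [hspos, mul_pos (mul_pos hα hγ) (pow_pos hσE 2), mul_pos (mul_pos hα hγ) hβ]
  have hfact : ∀ φ : ℝ, h φ = α * γ * (γ - β) * (φ - φa) * (φ - φb) := by
    intro φ
    rw [hh, hφa', hφb]
    field_simp
    linear_combination hs2
  refine ⟨hΔpos, ?_, ?_⟩
  · intro hpa φ hφ0 hφlt
    rw [max_eq_left hpa.le] at hφlt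
    have hlt : φ < φa := lt_of_lt_of_le hφlt (min_le_left _ _)
    have hlt2 : φ < φb := hlt.trans hab
    rw [hfact φ]
    nlinarith [mul_pos (sub_pos.mpr hlt) (sub_pos.mpr hlt2), mul_pos (mul_pos hα hγ) hd]
  · intro hpa1 φ hφgt hφle
    have hge : φa < φ := by
      have h1 : φa ≤ max φa 0 := le_max_left _ _
      have h2 : max φa 0 < 1 := by
        rcases le_or_gt φa 0 with hc | hc
        · rw [max_eq_right hc]; norm_num
        · rw [max_eq_left hc.le]; exact hpa1
      rw [min_eq_left h2.le] at hφgt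
      linarith
    have hltb : φ < φb := lt_of_le_of_lt hφle hb1
    rw [hfact φ]
    nlinarith [mul_pos (sub_pos.mpr hge) (sub_pos.mpr hltb), mul_pos (mul_pos hα hγ) hd]
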